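/- Let (Ω, ℱ, ℙ) be a probability space, X a random variable with values in a Polish space, and 𝒢, ℋ independent sub-σ-algebras such that X is measurable with respect to σ(𝒢, ℋ). Suppose that for ℙ-a.e. ω, the conditional law Law(X | 𝒢)(ω) is equivalent to a fixed probability measure m whenever conditioned on 𝒢. Then for any sub-σ-algebra 𝒢' ⊆ 𝒢 such that the 𝒢-conditional law of X depends only on 𝒢'-measurable data, Law(X | 𝒢')(ω) is also equivalent to m for a.e. ω. -/

import Mathlib

open MeasureTheory ProbabilityTheory

open scoped ENNReal

/-- Conditioning statement used in the Cameron–Martin lemma: let `𝒢, ℋ` be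
independent sub-σ-algebras, `X` measurable with respect to `σ(𝒢, ℋ)`, and
suppose the conditional law `Law(X | 𝒢)` is a.s. equivalent to a fixed
probability measure `m`. If `𝒢' ⊆ 𝒢` is a sub-σ-algebra such that the
`𝒢`-conditional law of `X` depends only on `𝒢'`-measurable data (i.e. the
evaluations `ω ↦ Law(X | 𝒢)(ω)(s)` are `𝒢'`-measurable), then `Law(X | 𝒢')`
is also a.s. equivalent to `m`. -/
theorem stmt_18 {Ω E : Type*} {m𝒢 m𝒢' mℋ : MeasurableSpace Ω}
    [mΩ : MeasurableSpace Ω] [StandardBorelSpace Ω] [Nonempty Ω]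
    [MeasurableSpace E]
    (hm𝒢 : m𝒢 ≤ mΩ) (hmℋ : mℋ ≤ mΩ) (hm𝒢' : m𝒢' ≤ m𝒢)
    (P : Measure Ω) [IsProbabilityMeasure P]
    (hindep : Indep m𝒢 mℋ P)
    (X : Ω → E) (hX : Measurable[m𝒢 ⊔ mℋ] X)
    (m : Measure E) [IsProbabilityMeasure m]
    (hequiv : ∀ᵐ ω ∂P,
      Measure.map X (condExpKernel P m𝒢 ω) ≪ m ∧
      m ≪ Measure.map X (condExpKernel P m𝒢 ω))
    (hdep : ∀ s : Set E, MeasurableSet s →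
      Measurable[m𝒢'] (fun ω => Measure.map X (condExpKernel P m𝒢 ω) s)) :
    ∀ᵐ ω ∂P,
      Measure.map X (condExpKernel P m𝒢' ω) ≪ m ∧
      m ≪ Measure.map X (condExpKernel P m𝒢' ω) := by
  classical
  have hm𝒢'' : m𝒢' ≤ mΩ := hm𝒢'.trans hm𝒢
  have hXm : Measurable X := hX.mono (sup_le hm𝒢 hmℋ) le_rfl
  -- the kernel `κ = condexpKernel P m𝒢` viewed as a measurable family of measures
  have hκmeas : Measurable (fun ω' => (condExpKernel P m𝒢 ω' : Measure Ω)) :=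
    (Kernel.measurable (condExpKernel P m𝒢)).mono hm𝒢 le_rfl
  -- the mixture of `condexpKernel P m𝒢` over `condexpKernel P m𝒢'`
  set lam : Ω → Measure Ω :=
    fun ω => (condExpKernel P m𝒢' ω : Measure Ω).bind
      (fun ω' => (condExpKernel P m𝒢 ω' : Measure Ω)) with hlam
  have hlam_apply : ∀ ω, ∀ A : Set Ω, MeasurableSet A →
      lam ω A = ∫⁻ ω', condExpKernel P m𝒢 ω' A ∂(condExpKernel P m𝒢' ω) := by
    intro ω A hA
    exact Measure.bind_apply hA hκmeas.aemeasurable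
  -- each `lam ω` is a probability measure
  have hlam_univ : ∀ ω, lam ω Set.univ = 1 := by
    intro ω
    rw [hlam_apply ω Set.univ MeasurableSet.univ]
    simp
  have hlam_ne_top : ∀ ω, ∀ A : Set Ω, lam ω A ≠ ∞ := by
    intro ω A
    have : lam ω A ≤ lam ω Set.univ := measure_mono (Set.subset_univ A)
    rw [hlam_univ ω] at this
    exact (this.trans_lt ENNReal.one_lt_top).ne
  -- step A : for each measurable set, `condexpKernel P m𝒢' · A = lam · A` a.e.
  have stepA : ∀ A : Set Ω, MeasurableSet A →
      ∀ᵐ ω ∂P, condExpKernel P m𝒢' ω A = lam ω A := by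
    intro A hA
    have h1 : (fun ω => (condExpKernel P m𝒢' ω A).toReal) =ᵐ[P] P⟦A | m𝒢'⟧ :=
      condExpKernel_ae_eq_condExp hm𝒢'' hA
    have h2 : P⟦A | m𝒢'⟧ =ᵐ[P] P[P⟦A | m𝒢⟧ | m𝒢'] :=
      (condExp_condExp_of_le hm𝒢' hm𝒢).symm
    have h3 : (P⟦A | m𝒢⟧ : Ω → ℝ) =ᵐ[P] fun ω => (condExpKernel P m𝒢 ω A).toReal :=
      (condExpKernel_ae_eq_condExp hm𝒢 hA).symm
    have h4 : P[P⟦A | m𝒢⟧ | m𝒢'] =ᵐ[P]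
        P[(fun ω => (condExpKernel P m𝒢 ω A).toReal) | m𝒢'] :=
      condExp_congr_ae h3
    have h5 : P[(fun ω => (condExpKernel P m𝒢 ω A).toReal) | m𝒢'] =ᵐ[P]
        fun ω => ∫ ω', (condExpKernel P m𝒢 ω' A).toReal ∂(condExpKernel P m𝒢' ω) :=
      condExp_ae_eq_integral_condExpKernel hm𝒢'' (integrable_toReal_condExpKernel hA)
    have h6 : ∀ ω, ∫ ω', (condExpKernel P m𝒢 ω' A).toReal ∂(condExpKernel P m𝒢' ω)
        = (lam ω A).toReal := by
      intro ω
      rw [hlam_apply ω A hA]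
      rw [integral_toReal]
      · exact ((measurable_condExpKernel hA).mono hm𝒢 le_rfl).aemeasurable
      · exact Filter.Eventually.of_forall fun ω' => measure_lt_top _ _
    have hcomb : (fun ω => (condExpKernel P m𝒢' ω A).toReal)
        =ᵐ[P] fun ω => (lam ω A).toReal := by
      filter_upwards [h1, h2.symm, h4.symm, h5.symm] with ω e1 e2 e3 e4
      rw [e1, ← e2, ← e3, ← e4, h6 ω]
    filter_upwards [hcomb] with ω hω
    exact (ENNReal.toReal_eq_toReal_iff' (measure_ne_top _ _) (hlam_ne_top ω A)).mp hω
  -- step B : a countable π-system generating `mΩ`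
  set S : Set (Set Ω) := MeasurableSpace.countableGeneratingSet Ω with hS
  set C : Set (Set Ω) :=
    {t | ∃ T : Set (Set Ω), T ⊆ S ∧ T.Finite ∧ T.Nonempty ∧ t = ⋂₀ T} with hC
  have hC_count : C.Countable := by
    have : C ⊆ (fun T : Set (Set Ω) => ⋂₀ T) '' {T | T.Finite ∧ T ⊆ S} := by
      rintro t ⟨T, hTS, hTfin, -, rfl⟩
      exact ⟨T, ⟨hTfin, hTS⟩, rfl⟩
    exact Set.Countable.mono this
      ((Set.countable_setOf_finite_subset
        (MeasurableSpace.countable_countableGeneratingSet (α := Ω))).image _)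
  have hC_pi : IsPiSystem C := by
    rintro t1 ⟨T1, hT1S, hT1f, hT1n, rfl⟩ t2 ⟨T2, hT2S, hT2f, hT2n, rfl⟩ -
    exact ⟨T1 ∪ T2, Set.union_subset hT1S hT2S, hT1f.union hT2f,
      hT1n.mono Set.subset_union_left, (Set.sInter_union T1 T2).symm⟩
  have hC_meas : ∀ t ∈ C, MeasurableSet t := by
    rintro t ⟨T, hTS, hTfin, -, rfl⟩
    exact hTfin.measurableSet_sInter fun u hu =>
      MeasurableSpace.measurableSet_countableGeneratingSet (hTS hu)
  have hC_gen : mΩ = MeasurableSpace.generateFrom C := by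
    refine le_antisymm ?_ (MeasurableSpace.generateFrom_le hC_meas)
    conv_lhs => rw [← MeasurableSpace.generateFrom_countableGeneratingSet (α := Ω)]
    refine MeasurableSpace.generateFrom_mono ?_
    intro s hs
    exact ⟨{s}, by simpa using hs, Set.finite_singleton s, Set.singleton_nonempty s,
      (Set.sInter_singleton s).symm⟩
  -- step C : a.e. equality of measures `condexpKernel P m𝒢' ω = lam ω`
  have stepC : ∀ᵐ ω ∂P, (condExpKernel P m𝒢' ω : Measure Ω) = lam ω := by
    have hae : ∀ᵐ ω ∂P, ∀ t ∈ C, condExpKernel P m𝒢' ω t = lam ω t :=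
      (ae_ball_iff hC_count).mpr fun t ht => stepA t (hC_meas t ht)
    filter_upwards [hae] with ω hω
    refine ext_of_generate_finite C hC_gen hC_pi hω ?_
    rw [hlam_univ ω, measure_univ]
  -- step D : a measurable null set outside which `hequiv` holds
  have hnull : P {ω | ¬ (Measure.map X (condExpKernel P m𝒢 ω) ≪ m ∧
      m ≪ Measure.map X (condExpKernel P m𝒢 ω))} = 0 := by
    rw [← ae_iff]; exact hequiv
  obtain ⟨N, hsubN, hNmeas, hPN⟩ := exists_measurable_superset_of_null hnull
  have hNgood : ∀ ω' ∉ N,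
      Measure.map X (condExpKernel P m𝒢 ω') ≪ m ∧
      m ≪ Measure.map X (condExpKernel P m𝒢 ω') := by
    intro ω' hω'
    by_contra h
    exact hω' (hsubN h)
  -- step E : a.e. `condexpKernel P m𝒢' ω N = 0`
  have stepE : ∀ᵐ ω ∂P, condExpKernel P m𝒢' ω N = 0 := by
    have h1 : (fun ω => (condExpKernel P m𝒢' ω N).toReal) =ᵐ[P] P⟦N | m𝒢'⟧ :=
      condExpKernel_ae_eq_condExp hm𝒢'' hNmeas
    have h2 : (N.indicator (fun _ => (1 : ℝ))) =ᵐ[P] 0 := by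
      refine Filter.eventuallyEq_iff_exists_mem.mpr ⟨Nᶜ, ?_, ?_⟩
      · rw [mem_ae_iff, compl_compl]; exact hPN
      · intro ω hω
        simp [Set.indicator_of_notMem hω]
    have h3 : P⟦N | m𝒢'⟧ =ᵐ[P] 0 := by
      refine (condExp_congr_ae h2).trans ?_
      rw [condExp_zero]
    filter_upwards [h1, h3] with ω e1 e3
    have : (condExpKernel P m𝒢' ω N).toReal = 0 := by rw [e1, e3]; rfl
    exact (ENNReal.toReal_eq_zero_iff _).mp this |>.resolve_right (measure_ne_top _ _)
  -- combine
  filter_upwards [stepC, stepE] with ω hωeq hωN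
  have key : ∀ s : Set E, MeasurableSet s →
      Measure.map X (condExpKernel P m𝒢' ω) s
        = ∫⁻ ω', Measure.map X (condExpKernel P m𝒢 ω') s ∂(condExpKernel P m𝒢' ω) := by
    intro s hs
    rw [Measure.map_apply hXm hs]
    calc condExpKernel P m𝒢' ω (X ⁻¹' s) = lam ω (X ⁻¹' s) := by rw [hωeq]
      _ = ∫⁻ ω', condExpKernel P m𝒢 ω' (X ⁻¹' s) ∂(condExpKernel P m𝒢' ω) :=
          hlam_apply ω _ (hXm hs)
      _ = ∫⁻ ω', Measure.map X (condExpKernel P m𝒢 ω') s ∂(condExpKernel P m𝒢' ω) := by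
          refine lintegral_congr fun ω' => ?_
          rw [Measure.map_apply hXm hs]
  constructor
  · -- `map X (condExpKernel P m𝒢' ω) ≪ m`
    refine Measure.AbsolutelyContinuous.mk fun s hs hms => ?_
    rw [key s hs]
    have hae0 : (fun ω' => Measure.map X (condExpKernel P m𝒢 ω') s)
        =ᵐ[(condExpKernel P m𝒢' ω : Measure Ω)] 0 := by
      refine Filter.eventuallyEq_iff_exists_mem.mpr ⟨Nᶜ, ?_, ?_⟩
      · rw [mem_ae_iff, compl_compl]; exact hωN
      · intro ω' hω'
        exact (hNgood ω' hω').1 hms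
    rw [lintegral_congr_ae hae0]
    simp
  · -- `m ≪ map X (condExpKernel P m𝒢' ω)`
    refine Measure.AbsolutelyContinuous.mk fun s hs h0 => ?_
    rw [key s hs] at h0
    have hfmeas : Measurable (fun ω' => Measure.map X (condExpKernel P m𝒢 ω') s) := by
      have h' : Measurable (fun ω' => condExpKernel P m𝒢 ω' (X ⁻¹' s)) :=
        (measurable_condExpKernel (hXm hs)).mono hm𝒢 le_rfl
      simpa only [Measure.map_apply hXm hs] using h'
    have hae0 : (fun ω' => Measure.map X (condExpKernel P m𝒢 ω') s)
        =ᵐ[(condExpKernel P m𝒢' ω : Measure Ω)] 0 :=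
      (lintegral_eq_zero_iff hfmeas).mp h0
    have hcompl : (condExpKernel P m𝒢' ω : Measure Ω)
        (({ω' | Measure.map X (condExpKernel P m𝒢 ω') s = 0} ∩ Nᶜ)ᶜ) = 0 := by
      rw [Set.compl_inter, compl_compl]
      refine measure_union_null ?_ hωN
      have h1 := ae_iff.mp hae0
      simpa [Set.compl_setOf] using h1
    have hGne : ({ω' | Measure.map X (condExpKernel P m𝒢 ω') s = 0} ∩ Nᶜ).Nonempty := by
      by_contra h
      rw [Set.not_nonempty_iff_eq_empty] at h
      rw [h, Set.compl_empty] at hcompl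
      simp at hcompl
    obtain ⟨ω', hω'0, hω'N⟩ := hGne
    exact (hNgood ω' hω'N).2 hω'0
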